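/- Let K > 0 and define Γ_K : ℝ → [0, ∞) by Γ_K(t) = |t|^{5/2} if |t| ≤ K and Γ_K(t) = (5/4) K^{1/2} t² − (1/4) K^{5/2} if |t| ≥ K, and let ‖f‖_{Γ_K} := inf { λ > 0 : ∫_𝕋 Γ_K(f(x)/λ) dx ≤ 1 } denote the associated Orlicz norm on measurable functions on 𝕋 = [0,1]. Then for any measurable functions f_1, …, f_k from 𝕋 to ℝ, ‖ (∑_{i=1}^k |f_i|²)^{1/2} ‖_{Γ_K} ≤ ( ∑_{i=1}^k ‖f_i‖²_{Γ_K} )^{1/2}. -/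

import Mathlib

open MeasureTheory

/-- The Young function `Γ_K`. -/
noncomputable def GammaK (K t : ℝ) : ℝ :=
  if |t| ≤ K then |t| ^ ((5:ℝ)/2)
  else (5/4) * K ^ ((1:ℝ)/2) * t ^ 2 - (1/4) * K ^ ((5:ℝ)/2)

/-- The Orlicz (Luxemburg) norm associated to `Γ_K` on functions on `[0,1]`. -/
noncomputable def orliczNormK (K : ℝ) (f : ℝ → ℝ) : ℝ :=
  sInf { lam : ℝ | 0 < lam ∧ (∫ x in Set.Icc (0:ℝ) 1, GammaK K (f x / lam)) ≤ 1 }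

noncomputable def psiK (K u : ℝ) : ℝ :=
  if u ≤ K ^ 2 then u ^ ((5:ℝ)/4)
  else (5/4) * K ^ ((1:ℝ)/2) * u - (1/4) * K ^ ((5:ℝ)/2)

lemma psiK_boundary {K : ℝ} (hK : 0 < K) :
    (K ^ 2 : ℝ) ^ ((5:ℝ)/4) = (5/4) * K ^ ((1:ℝ)/2) * K ^ 2 - (1/4) * K ^ ((5:ℝ)/2) := by
  have h1 : K ^ ((5:ℝ)/2) = K ^ ((1:ℝ)/2) * K ^ 2 := by
    rw [← Real.rpow_natCast K 2, ← Real.rpow_add hK]; norm_num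
  have h2 : (K ^ 2 : ℝ) ^ ((5:ℝ)/4) = K ^ ((5:ℝ)/2) := by
    rw [← Real.rpow_natCast K 2, ← Real.rpow_mul hK.le]; norm_num
  rw [h2, h1]; ring

lemma gammaK_eq_psiK {K : ℝ} (hK : 0 < K) (t : ℝ) : GammaK K t = psiK K (t ^ 2) := by
  have h1 : |t| ≤ K ↔ t ^ 2 ≤ K ^ 2 := by
    rw [sq_le_sq, abs_of_pos hK]
  have h2 : (t ^ 2 : ℝ) ^ ((5:ℝ)/4) = |t| ^ ((5:ℝ)/2) := by
    rw [← sq_abs, ← Real.rpow_natCast |t| 2, ← Real.rpow_mul (abs_nonneg t)]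
    norm_num
  unfold GammaK psiK
  rw [h2]
  by_cases h : |t| ≤ K
  · rw [if_pos h, if_pos (h1.mp h)]
  · rw [if_neg h, if_neg (fun hc => h (h1.mpr hc))]

lemma K52_eq {K : ℝ} (hK : 0 < K) : K ^ ((5:ℝ)/2) = K ^ ((1:ℝ)/2) * K ^ 2 := by
  rw [← Real.rpow_natCast K 2, ← Real.rpow_add hK]; norm_num

lemma K2_quarter {K : ℝ} (hK : 0 < K) : ((K:ℝ) ^ 2) ^ ((1:ℝ)/4) = K ^ ((1:ℝ)/2) := by
  rw [← Real.rpow_natCast K 2, ← Real.rpow_mul hK.le]; norm_num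

lemma psiK_continuous {K : ℝ} (hK : 0 < K) : Continuous (psiK K) := by
  have h1 : Continuous fun u : ℝ => u ^ ((5:ℝ)/4) := by
    rw [continuous_iff_continuousAt]
    exact fun x => Real.continuousAt_rpow_const x _ (Or.inr (by norm_num))
  have h2 : Continuous fun u : ℝ => (5/4) * K ^ ((1:ℝ)/2) * u - (1/4) * K ^ ((5:ℝ)/2) := by
    fun_prop
  exact h1.if_le h2 continuous_id continuous_const fun x hx => by rw [hx]; exact psiK_boundary hK

lemma psiK_hasDerivAt {K : ℝ} (hK : 0 < K) {u : ℝ} (hu : 0 < u) :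
    HasDerivAt (psiK K)
      (if u ≤ K ^ 2 then (5/4) * u ^ ((1:ℝ)/4) else (5/4) * K ^ ((1:ℝ)/2)) u := by
  have hK2 : (0:ℝ) < K ^ 2 := by positivity
  have hlin : ∀ v : ℝ, HasDerivAt (fun w : ℝ => (5/4) * K ^ ((1:ℝ)/2) * w - (1/4) * K ^ ((5:ℝ)/2))
      ((5/4) * K ^ ((1:ℝ)/2)) v := by
    intro v
    simpa using (((hasDerivAt_id v).const_mul ((5/4) * K ^ ((1:ℝ)/2))).sub_const
      ((1/4) * K ^ ((5:ℝ)/2)))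
  rcases lt_trichotomy u (K ^ 2) with h | h | h
  · rw [if_pos h.le]
    have hp : HasDerivAt (fun v : ℝ => v ^ ((5:ℝ)/4)) ((5/4) * u ^ ((1:ℝ)/4)) u := by
      have := Real.hasDerivAt_rpow_const (x := u) (p := (5:ℝ)/4) (Or.inl hu.ne')
      convert this using 2; norm_num
    refine hp.congr_of_eventuallyEq ?_
    filter_upwards [Filter.Tendsto.eventually_lt_const h (fun _ => id : Filter.Tendsto id (nhds u) (nhds u))] with v hv
    simp only [psiK, if_pos hv.le]
  · subst h
    rw [if_pos le_rfl]
    have hdq : (5/4) * ((K:ℝ) ^ 2) ^ ((1:ℝ)/4) = (5/4) * K ^ ((1:ℝ)/2) := by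
      rw [K2_quarter hK]
    rw [hdq]
    have hleft : HasDerivWithinAt (psiK K) ((5/4) * K ^ ((1:ℝ)/2)) (Set.Iic (K ^ 2)) (K ^ 2) := by
      have hp : HasDerivAt (fun v : ℝ => v ^ ((5:ℝ)/4)) ((5/4) * K ^ ((1:ℝ)/2)) (K ^ 2) := by
        have h := Real.hasDerivAt_rpow_const (x := (K:ℝ)^2) (p := (5:ℝ)/4) (Or.inl hK2.ne')
        rw [show (5:ℝ)/4 - 1 = 1/4 by norm_num, K2_quarter hK] at h
        exact h
      exact (hp.hasDerivWithinAt).congr (fun v hv => if_pos hv) (if_pos le_rfl)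
    have hright : HasDerivWithinAt (psiK K) ((5/4) * K ^ ((1:ℝ)/2)) (Set.Ici (K ^ 2)) (K ^ 2) := by
      refine ((hlin (K ^ 2)).hasDerivWithinAt).congr (fun v hv => ?_) ?_
      · rcases eq_or_lt_of_le (Set.mem_Ici.mp hv : K ^ 2 ≤ v) with h | h
        · simp only [psiK, ← h]; rw [if_pos le_rfl]; exact psiK_boundary hK
        · simp only [psiK, if_neg (not_le.mpr h)]
      · simp only [psiK]; rw [if_pos le_rfl]; exact psiK_boundary hK
    have := hleft.union hright
    rwa [Set.Iic_union_Ici, hasDerivWithinAt_univ] at this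
  · rw [if_neg (not_le.mpr h)]
    refine (hlin u).congr_of_eventuallyEq ?_
    filter_upwards [Filter.Tendsto.eventually_const_lt h (fun _ => id : Filter.Tendsto id (nhds u) (nhds u))] with v hv
    simp only [psiK, if_neg (not_le.mpr hv)]

lemma psiK_convexOn {K : ℝ} (hK : 0 < K) : ConvexOn ℝ (Set.Ici 0) (psiK K) := by
  have hd : ∀ u ∈ interior (Set.Ici (0:ℝ)), HasDerivAt (psiK K)
      (if u ≤ K ^ 2 then (5/4) * u ^ ((1:ℝ)/4) else (5/4) * K ^ ((1:ℝ)/2)) u := by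
    rw [interior_Ici]; exact fun u hu => psiK_hasDerivAt hK hu
  refine MonotoneOn.convexOn_of_deriv (convex_Ici 0) (psiK_continuous hK).continuousOn
    (fun u hu => (hd u hu).differentiableAt.differentiableWithinAt) ?_
  intro a ha b hb hab
  rw [(hd a ha).deriv, (hd b hb).deriv]
  rw [interior_Ici] at ha hb
  by_cases h1 : a ≤ K ^ 2
  · rw [if_pos h1]
    by_cases h2 : b ≤ K ^ 2
    · rw [if_pos h2]
      have := Real.rpow_le_rpow (le_of_lt ha) hab (by norm_num : (0:ℝ) ≤ 1/4)
      linarith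
    · rw [if_neg h2, ← K2_quarter hK]
      have := Real.rpow_le_rpow (le_of_lt ha) h1 (by norm_num : (0:ℝ) ≤ 1/4)
      linarith
  · rw [if_neg h1, if_neg (fun hc : b ≤ K ^ 2 => h1 (hab.trans hc))]

lemma psiK_nonneg {K : ℝ} (hK : 0 < K) {u : ℝ} (hu : 0 ≤ u) : 0 ≤ psiK K u := by
  have hs : (0:ℝ) < K ^ ((1:ℝ)/2) := Real.rpow_pos_of_pos hK _
  unfold psiK
  by_cases h : u ≤ K ^ 2
  · rw [if_pos h]; exact Real.rpow_nonneg hu _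
  · rw [if_neg h, K52_eq hK]
    push_neg at h
    nlinarith [sq_nonneg K]

lemma psiK_le {K : ℝ} (hK : 0 < K) {u : ℝ} (hu : 0 ≤ u) :
    psiK K u ≤ (5/4) * K ^ ((1:ℝ)/2) * u := by
  have hs : (0:ℝ) < K ^ ((1:ℝ)/2) := Real.rpow_pos_of_pos hK _
  unfold psiK
  by_cases h : u ≤ K ^ 2
  · rw [if_pos h]
    have h1 : u ^ ((5:ℝ)/4) = u ^ (1:ℝ) * u ^ ((1:ℝ)/4) := by
      rw [← Real.rpow_add' hu (by norm_num)]; norm_num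
    have h2 : u ^ ((1:ℝ)/4) ≤ K ^ ((1:ℝ)/2) := by
      rw [← K2_quarter hK]
      exact Real.rpow_le_rpow hu h (by norm_num)
    have h3 : (0:ℝ) ≤ u ^ ((1:ℝ)/4) := Real.rpow_nonneg hu _
    rw [h1, Real.rpow_one]
    nlinarith
  · rw [if_neg h]
    have : (0:ℝ) ≤ K ^ ((5:ℝ)/2) := Real.rpow_nonneg hK.le _
    linarith

lemma le_psiK {K : ℝ} (hK : 0 < K) {u : ℝ} (hu : 0 ≤ u) :
    K ^ ((1:ℝ)/2) * u - K ^ ((5:ℝ)/2) ≤ psiK K u := by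
  have hs : (0:ℝ) < K ^ ((1:ℝ)/2) := Real.rpow_pos_of_pos hK _
  unfold psiK
  by_cases h : u ≤ K ^ 2
  · rw [if_pos h]
    have h3 : (0:ℝ) ≤ u ^ ((5:ℝ)/4) := Real.rpow_nonneg hu _
    rw [K52_eq hK]
    nlinarith
  · rw [if_neg h, K52_eq hK]
    push_neg at h
    nlinarith [sq_nonneg K]

lemma gammaK_continuous {K : ℝ} (hK : 0 < K) : Continuous (GammaK K) := by
  have : GammaK K = fun t => psiK K (t ^ 2) := funext (gammaK_eq_psiK hK)
  rw [this]; exact (psiK_continuous hK).comp (continuous_pow 2)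

lemma gammaK_nonneg {K : ℝ} (hK : 0 < K) (t : ℝ) : 0 ≤ GammaK K t := by
  rw [gammaK_eq_psiK hK]; exact psiK_nonneg hK (sq_nonneg t)

lemma integrable_gamma_of_sq {K lam : ℝ} {h : ℝ → ℝ} (hK : 0 < K) (hm : Measurable h)
    (hlam : lam ≠ 0) (hi : Integrable (fun x => h x ^ 2) (volume.restrict (Set.Icc 0 1))) :
    Integrable (fun x => GammaK K (h x / lam)) (volume.restrict (Set.Icc 0 1)) := by
  refine Integrable.mono' (hi.const_mul ((5/4) * K ^ ((1:ℝ)/2) / lam ^ 2))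
    ((gammaK_continuous hK).measurable.comp (hm.div_const lam)).aestronglyMeasurable
    (Filter.Eventually.of_forall fun x => ?_)
  rw [Real.norm_eq_abs, abs_of_nonneg (gammaK_nonneg hK _), gammaK_eq_psiK hK, div_pow]
  have h1 := psiK_le hK (u := h x ^ 2 / lam ^ 2) (by positivity)
  have h2 : (5/4) * K ^ ((1:ℝ)/2) * (h x ^ 2 / lam ^ 2)
      = (5/4) * K ^ ((1:ℝ)/2) / lam ^ 2 * h x ^ 2 := by ring
  linarith

lemma sq_integrable_of_gamma {K lam : ℝ} {h : ℝ → ℝ} (hK : 0 < K) (hm : Measurable h)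
    (hlam : lam ≠ 0)
    (hi : Integrable (fun x => GammaK K (h x / lam)) (volume.restrict (Set.Icc 0 1))) :
    Integrable (fun x => h x ^ 2) (volume.restrict (Set.Icc 0 1)) := by
  have hconst : Integrable (fun _ : ℝ => K ^ ((5:ℝ)/2)) (volume.restrict (Set.Icc 0 1)) := by
    refine (integrableOn_const_iff).mpr (Or.inr ?_)
    rw [Real.volume_Icc]; norm_num
  refine Integrable.mono' ((hi.add hconst).const_mul (lam ^ 2 / K ^ ((1:ℝ)/2)))
    ((hm.pow_const 2).aestronglyMeasurable)
    (Filter.Eventually.of_forall fun x => ?_)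
  have hs : (0:ℝ) < K ^ ((1:ℝ)/2) := Real.rpow_pos_of_pos hK _
  have hl2 : (0:ℝ) < lam ^ 2 := by positivity
  rw [Real.norm_eq_abs, abs_of_nonneg (sq_nonneg _)]
  have h1 := le_psiK hK (u := (h x / lam) ^ 2) (sq_nonneg _)
  rw [← gammaK_eq_psiK hK, div_pow] at h1
  have h2 : K ^ ((1:ℝ)/2) * (h x ^ 2 / lam ^ 2) = K ^ ((1:ℝ)/2) / lam ^ 2 * h x ^ 2 := by ring
  rw [h2] at h1
  have h3 : h x ^ 2 = lam ^ 2 / K ^ ((1:ℝ)/2) * (K ^ ((1:ℝ)/2) / lam ^ 2 * h x ^ 2) := by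
    field_simp
  rw [h3]
  have h4 : K ^ ((1:ℝ)/2) / lam ^ 2 * h x ^ 2 ≤ GammaK K (h x / lam) + K ^ ((5:ℝ)/2) := by
    linarith
  have h5 : (0:ℝ) ≤ lam ^ 2 / K ^ ((1:ℝ)/2) := by positivity
  exact mul_le_mul_of_nonneg_left h4 h5

lemma orliczNormK_nonneg (K : ℝ) (f : ℝ → ℝ) : 0 ≤ orliczNormK K f :=
  Real.sInf_nonneg fun _ hx => hx.1.le

lemma orliczK_set_bddBelow (K : ℝ) (f : ℝ → ℝ) :
    BddBelow { lam : ℝ | 0 < lam ∧ (∫ x in Set.Icc (0:ℝ) 1, GammaK K (f x / lam)) ≤ 1 } :=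
  ⟨0, fun _ hx => hx.1.le⟩

lemma orliczNormK_eq_zero_of_not_integrable {K : ℝ} {h : ℝ → ℝ} (hK : 0 < K)
    (hm : Measurable h) (hni : ¬ Integrable (fun x => h x ^ 2) (volume.restrict (Set.Icc 0 1))) :
    orliczNormK K h = 0 := by
  unfold orliczNormK
  have hset : { lam : ℝ | 0 < lam ∧ (∫ x in Set.Icc (0:ℝ) 1, GammaK K (h x / lam)) ≤ 1 }
      = Set.Ioi 0 := by
    ext lam
    simp only [Set.mem_setOf_eq, Set.mem_Ioi]
    refine ⟨fun hx => hx.1, fun hl => ⟨hl, ?_⟩⟩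
    rw [integral_undef fun hc => hni (sq_integrable_of_gamma hK hm hl.ne' hc)]
    norm_num
  rw [hset, csInf_Ioi]

lemma orliczK_set_nonempty {K : ℝ} {h : ℝ → ℝ} (hK : 0 < K) (hm : Measurable h)
    (hi : Integrable (fun x => h x ^ 2) (volume.restrict (Set.Icc 0 1))) :
    { lam : ℝ | 0 < lam ∧ (∫ x in Set.Icc (0:ℝ) 1, GammaK K (h x / lam)) ≤ 1 }.Nonempty := by
  have hs : (0:ℝ) < K ^ ((1:ℝ)/2) := Real.rpow_pos_of_pos hK _
  set I := ∫ x in Set.Icc (0:ℝ) 1, h x ^ 2 with hIdef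
  have hI0 : 0 ≤ I := integral_nonneg fun x => sq_nonneg _
  set B := (5/4) * K ^ ((1:ℝ)/2) * I with hBdef
  have hB0 : 0 ≤ B := by nlinarith
  set lam := Real.sqrt B + 1 with hlamdef
  have hlam0 : 0 < lam := by positivity
  refine ⟨lam, hlam0, ?_⟩
  have hle : ∀ x, GammaK K (h x / lam) ≤ (5/4) * K ^ ((1:ℝ)/2) / lam ^ 2 * h x ^ 2 := by
    intro x
    rw [gammaK_eq_psiK hK, div_pow]
    have h1 := psiK_le hK (u := h x ^ 2 / lam ^ 2) (by positivity)
    have h2 : (5/4) * K ^ ((1:ℝ)/2) * (h x ^ 2 / lam ^ 2)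
        = (5/4) * K ^ ((1:ℝ)/2) / lam ^ 2 * h x ^ 2 := by ring
    linarith
  have hmono := integral_mono (integrable_gamma_of_sq hK hm hlam0.ne' hi)
    (hi.const_mul ((5/4) * K ^ ((1:ℝ)/2) / lam ^ 2)) hle
  rw [MeasureTheory.integral_const_mul] at hmono
  refine hmono.trans ?_
  have hsq : Real.sqrt B ^ 2 = B := Real.sq_sqrt hB0
  have hBlam : B ≤ lam ^ 2 := by nlinarith [Real.sqrt_nonneg B]
  have : (5/4) * K ^ ((1:ℝ)/2) / lam ^ 2 * I = B / lam ^ 2 := by rw [hBdef]; ring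
  rw [← hIdef, this]
  exact div_le_one_of_le₀ hBlam (by positivity)

theorem orliczK_two_convex (K : ℝ) (hK : 0 < K) (k : ℕ) (f : Fin k → ℝ → ℝ)
    (hmeas : ∀ i, Measurable (f i)) :
    orliczNormK K (fun x => Real.sqrt (∑ i, f i x ^ 2))
      ≤ Real.sqrt (∑ i, orliczNormK K (f i) ^ 2) := by
  set g : ℝ → ℝ := fun x => Real.sqrt (∑ i, f i x ^ 2) with hgdef
  have hsum_nonneg : ∀ x, (0:ℝ) ≤ ∑ i, f i x ^ 2 :=
    fun x => Finset.sum_nonneg fun i _ => sq_nonneg _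
  have hgm : Measurable g :=
    Real.continuous_sqrt.measurable.comp (Finset.measurable_sum _ fun i _ => (hmeas i).pow_const 2)
  have hgsq : ∀ x, g x ^ 2 = ∑ i, f i x ^ 2 := fun x => Real.sq_sqrt (hsum_nonneg x)
  by_cases hint : ∀ i, Integrable (fun x => f i x ^ 2) (volume.restrict (Set.Icc 0 1))
  swap
  · -- some square non-integrable: both norms degenerate
    push_neg at hint
    obtain ⟨i0, hi0⟩ := hint
    have hgni : ¬ Integrable (fun x => g x ^ 2) (volume.restrict (Set.Icc 0 1)) := by
      intro hc
      refine hi0 (Integrable.mono' hc ((hmeas i0).pow_const 2).aestronglyMeasurable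
        (Filter.Eventually.of_forall fun x => ?_))
      rw [Real.norm_eq_abs, abs_of_nonneg (sq_nonneg _), hgsq]
      exact Finset.single_le_sum (fun i _ => sq_nonneg (f i x)) (Finset.mem_univ i0)
    rw [orliczNormK_eq_zero_of_not_integrable hK hgm hgni]
    exact Real.sqrt_nonneg _
  rcases Nat.eq_zero_or_pos k with hk | hk
  · -- k = 0
    subst hk
    have hg0 : g = fun _ => (0:ℝ) := by
      funext x; rw [hgdef]; simp
    have hG0 : GammaK K 0 = 0 := by
      rw [GammaK, if_pos (by rw [abs_zero]; exact hK.le), abs_zero,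
        Real.zero_rpow (by norm_num)]
    have hLHS : orliczNormK K g = 0 := by
      unfold orliczNormK
      have hset : { lam : ℝ | 0 < lam ∧ (∫ x in Set.Icc (0:ℝ) 1, GammaK K (g x / lam)) ≤ 1 }
          = Set.Ioi 0 := by
        ext lam
        simp only [Set.mem_setOf_eq, Set.mem_Ioi, hg0, zero_div, hG0, integral_zero]
        exact ⟨fun hx => hx.1, fun hl => ⟨hl, by norm_num⟩⟩
      rw [hset, csInf_Ioi]
    rw [hLHS]
    exact Real.sqrt_nonneg _
  -- main case
  set N : Fin k → ℝ := fun i => orliczNormK K (f i) with hNdef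
  have hN0 : ∀ i, 0 ≤ N i := fun i => orliczNormK_nonneg K (f i)
  have key : ∀ ε : ℝ, 0 < ε →
      orliczNormK K g ≤ Real.sqrt (∑ i, (N i + ε) ^ 2) := by
    intro ε hε
    have hchoose : ∀ i, ∃ lam, (0 < lam ∧
        (∫ x in Set.Icc (0:ℝ) 1, GammaK K (f i x / lam)) ≤ 1) ∧ lam < N i + ε := by
      intro i
      obtain ⟨a, ha, halt⟩ := exists_lt_of_csInf_lt
        (orliczK_set_nonempty hK (hmeas i) (hint i))
        (show orliczNormK K (f i) < N i + ε from lt_add_of_pos_right _ hε)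
      exact ⟨a, ha, halt⟩
    choose lam hmem hlt using hchoose
    have hlam0 : ∀ i, 0 < lam i := fun i => (hmem i).1
    set Lam := Real.sqrt (∑ i, lam i ^ 2) with hLamdef
    have hsumlam : (0:ℝ) < ∑ i, lam i ^ 2 := by
      refine Finset.sum_pos (fun i _ => pow_pos (hlam0 i) 2) ?_
      exact ⟨⟨0, hk⟩, Finset.mem_univ _⟩
    have hLam0 : 0 < Lam := Real.sqrt_pos.mpr hsumlam
    have hLamsq : Lam ^ 2 = ∑ i, lam i ^ 2 := Real.sq_sqrt hsumlam.le
    set w : Fin k → ℝ := fun i => lam i ^ 2 / Lam ^ 2 with hwdef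
    have hw0 : ∀ i, 0 ≤ w i := fun i => by positivity
    have hwsum : ∑ i, w i = 1 := by
      rw [hwdef, ← Finset.sum_div, ← hLamsq, div_self (by positivity)]
    -- pointwise Jensen
    have hpt : ∀ x, GammaK K (g x / Lam)
        ≤ ∑ i, w i * GammaK K (f i x / lam i) := by
      intro x
      have hjen := (psiK_convexOn hK).map_sum_le (t := Finset.univ)
        (w := w) (p := fun i => (f i x / lam i) ^ 2)
        (fun i _ => hw0 i) hwsum (fun i _ => Set.mem_Ici.mpr (sq_nonneg _))
      have harg : ∑ i, w i • (f i x / lam i) ^ 2 = (g x / Lam) ^ 2 := by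
        rw [div_pow, hgsq, Finset.sum_div]
        refine Finset.sum_congr rfl fun i _ => ?_
        rw [smul_eq_mul, hwdef, div_pow]
        field_simp
        exact mul_div_cancel_left₀ _ (hlam0 i).ne'
      rw [harg] at hjen
      rw [gammaK_eq_psiK hK]
      refine hjen.trans (le_of_eq (Finset.sum_congr rfl fun i _ => ?_))
      rw [smul_eq_mul, ← gammaK_eq_psiK hK]
    -- integrate
    have hgsqint : Integrable (fun x => g x ^ 2) (volume.restrict (Set.Icc 0 1)) := by
      have : (fun x => g x ^ 2) = fun x => ∑ i, f i x ^ 2 := funext hgsq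
      rw [this]
      exact integrable_finset_sum _ fun i _ => hint i
    have hgint : Integrable (fun x => GammaK K (g x / Lam)) (volume.restrict (Set.Icc 0 1)) :=
      integrable_gamma_of_sq hK hgm hLam0.ne' hgsqint
    have hiint : ∀ i, Integrable (fun x => GammaK K (f i x / lam i))
        (volume.restrict (Set.Icc 0 1)) :=
      fun i => integrable_gamma_of_sq hK (hmeas i) (hlam0 i).ne' (hint i)
    have hRint : Integrable (fun x => ∑ i, w i * GammaK K (f i x / lam i))
        (volume.restrict (Set.Icc 0 1)) :=
      integrable_finset_sum _ fun i _ => (hiint i).const_mul _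
    have hintle : (∫ x in Set.Icc (0:ℝ) 1, GammaK K (g x / Lam)) ≤ 1 := by
      refine (integral_mono hgint hRint hpt).trans ?_
      rw [integral_finset_sum _ fun i _ => (hiint i).const_mul _]
      have : ∀ i ∈ Finset.univ, (∫ x in Set.Icc (0:ℝ) 1, w i * GammaK K (f i x / lam i)) ≤ w i := by
        intro i _
        rw [MeasureTheory.integral_const_mul]
        calc w i * ∫ x in Set.Icc (0:ℝ) 1, GammaK K (f i x / lam i)
            ≤ w i * 1 := mul_le_mul_of_nonneg_left (hmem i).2 (hw0 i)
          _ = w i := mul_one _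
      exact (Finset.sum_le_sum this).trans (le_of_eq hwsum)
    have hmemLam : Lam ∈ { lam : ℝ | 0 < lam ∧
        (∫ x in Set.Icc (0:ℝ) 1, GammaK K (g x / lam)) ≤ 1 } := ⟨hLam0, hintle⟩
    have h1 : orliczNormK K g ≤ Lam := csInf_le (orliczK_set_bddBelow K g) hmemLam
    refine h1.trans ?_
    rw [hLamdef]
    refine Real.sqrt_le_sqrt (Finset.sum_le_sum fun i _ => ?_)
    exact pow_le_pow_left₀ (hlam0 i).le (hlt i).le 2
  -- take ε → 0
  have hF : Continuous fun ε : ℝ => Real.sqrt (∑ i, (N i + ε) ^ 2) := by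
    refine Real.continuous_sqrt.comp (continuous_finset_sum _ fun i _ => ?_)
    exact (continuous_const.add continuous_id).pow 2
  have htend : Filter.Tendsto (fun ε : ℝ => Real.sqrt (∑ i, (N i + ε) ^ 2))
      (nhdsWithin 0 (Set.Ioi 0)) (nhds (Real.sqrt (∑ i, (N i + 0) ^ 2))) :=
    (hF.tendsto 0).mono_left nhdsWithin_le_nhds
  have := ge_of_tendsto htend (Filter.eventually_of_mem self_mem_nhdsWithin
    fun ε hε => key ε hε)
  simpa using this
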